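/- Let R be a finite reduced commutative ring with identity that is not an integral domain, and suppose the compressed zero-divisor graph Γ_E(R) contains no cycle (i.e., its girth is infinite). Then Γ_E(R) has exactly two vertices, which are adjacent, and Ddim(Γ_E(R)) = 1. -/

import Mathlib

open SimpleGraph

/-- `Zstar R` is the set of nonzero zero-divisors of the commutative ring `R`. -/
def Zstar (R : Type*) [CommRing R] : Set R :=
  {x : R | x ≠ 0 ∧ ∃ y : R, y ≠ 0 ∧ x * y = 0}

/-- `annSet R x` is the annihilator of `x`, i.e. `{y : R | x * y = 0}`. -/
def annSet (R : Type*) [CommRing R] (x : R) : Set R :=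
  {y : R | x * y = 0}

/-- Two nonzero zero-divisors are equivalent iff they have the same annihilator. -/
instance zdvSetoid (R : Type*) [CommRing R] : Setoid (Zstar R) :=
  ⟨fun a b => annSet R a.1 = annSet R b.1, ⟨fun _ => rfl, Eq.symm, Eq.trans⟩⟩

/-- The vertices of the compressed zero-divisor graph `Γ_E(R)`: equivalence
classes `[x]` of nonzero zero-divisors under equality of annihilators. -/
abbrev CZDVertex (R : Type*) [CommRing R] : Type _ :=
  Quotient (zdvSetoid R)

/-- The compressed zero-divisor graph `Γ_E(R)`: distinct classes `[x]` and `[y]`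
are adjacent iff `x * y = 0` (which is independent of the chosen representatives). -/
def CZDG (R : Type*) [CommRing R] : SimpleGraph (CZDVertex R) where
  Adj u v := u ≠ v ∧ ∃ a b : Zstar R,
    (⟦a⟧ : CZDVertex R) = u ∧ (⟦b⟧ : CZDVertex R) = v ∧ (a : R) * b = 0
  symm := by
    refine ⟨?_⟩
    rintro u v ⟨huv, a, b, ha, hb, hab⟩
    exact ⟨huv.symm, b, a, hb, ha, by rwa [mul_comm]⟩
  loopless := by
    refine ⟨?_⟩
    rintro u ⟨h, -⟩
    exact h rfl

/-- A set `W` of vertices is resolving if any two distinct vertices have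
different distance to some vertex of `W`. -/
def IsResolving {V : Type*} (G : SimpleGraph V) (W : Set V) : Prop :=
  ∀ u v : V, u ≠ v → ∃ w ∈ W, G.dist u w ≠ G.dist v w

/-- A set `W` of vertices is dominating if every vertex outside `W` is adjacent
to some vertex of `W`. -/
def IsDominating {V : Type*} (G : SimpleGraph V) (W : Set V) : Prop :=
  ∀ v : V, v ∉ W → ∃ w ∈ W, G.Adj v w

/-- The dominant metric dimension `Ddim G`: the minimum cardinality of a set of
vertices that is simultaneously resolving and dominating, with the convention
that it is `0` for a graph with exactly one vertex. -/
noncomputable def Ddim {V : Type*} (G : SimpleGraph V) : ℕ∞ :=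
  if Nat.card V = 1 then 0
  else sInf {n : ℕ∞ | ∃ W : Set V, IsResolving G W ∧ IsDominating G W ∧ W.encard = n}

lemma exists_idem_pow {R : Type*} [Monoid R] [Finite R] (a : R) :
    ∃ k : ℕ, 0 < k ∧ IsIdempotentElem (a ^ k) := by
  have key : ∀ m r : ℕ, 0 < r → a ^ m = a ^ (m + r) →
      ∃ k : ℕ, 0 < k ∧ IsIdempotentElem (a ^ k) := by
    intro m r hr h
    have step : ∀ t, a ^ (m + t) = a ^ (m + t + r) := by
      intro t
      calc a ^ (m + t) = a ^ m * a ^ t := by rw [pow_add]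
        _ = a ^ (m + r) * a ^ t := by rw [h]
        _ = a ^ (m + t + r) := by rw [← pow_add]; ring_nf
    have iter : ∀ k t, a ^ (m + t) = a ^ (m + t + k * r) := by
      intro k
      induction k with
      | zero => simp
      | succ k ih =>
        intro t
        calc a ^ (m + t) = a ^ (m + t + k * r) := ih t
          _ = a ^ (m + (t + k * r)) := by congr 1; ring
          _ = a ^ (m + (t + k * r) + r) := step (t + k * r)
          _ = a ^ (m + t + (k + 1) * r) := by congr 1; ring
    have hm : m ≤ (m + 1) * r := by
      calc m ≤ m + 1 := Nat.le_succ m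
        _ ≤ (m + 1) * r := Nat.le_mul_of_pos_right _ hr
    set s := (m + 1) * r with hs
    refine ⟨s, Nat.mul_pos (Nat.succ_pos m) hr, ?_⟩
    unfold IsIdempotentElem
    calc a ^ s * a ^ s = a ^ (m + (s - m) + s) := by rw [← pow_add]; congr 1; omega
      _ = a ^ (m + (s - m) + (m + 1) * r) := by rw [← hs]
      _ = a ^ (m + (s - m)) := (iter (m + 1) (s - m)).symm
      _ = a ^ s := by congr 1; omega
  obtain ⟨m, n, hmn, h⟩ := Finite.exists_ne_map_eq_of_infinite (fun n : ℕ => a ^ n)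
  rcases Nat.lt_or_ge m n with hlt | hge
  · exact key m (n - m) (by omega) (by rw [show m + (n - m) = n by omega]; exact h)
  · have hlt : n < m := lt_of_le_of_ne hge (Ne.symm hmn)
    exact key n (m - n) (by omega) (by rw [show n + (m - n) = m by omega]; exact h.symm)

lemma annSet_pow {R : Type*} [CommRing R] [IsReduced R] (a : R) {k : ℕ} (hk : 0 < k) :
    annSet R (a ^ k) = annSet R a := by
  obtain ⟨j, rfl⟩ : ∃ j, k = j + 1 := ⟨k - 1, by omega⟩
  ext y
  simp only [annSet, Set.mem_setOf_eq]
  constructor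
  · intro h
    have hn : (a * y) ^ (j + 1) = 0 := by
      calc (a * y) ^ (j + 1) = (a ^ (j + 1) * y) * y ^ j := by rw [mul_pow, pow_succ]; ring
        _ = 0 := by rw [h, zero_mul]
    exact IsNilpotent.eq_zero ⟨j + 1, hn⟩
  · intro h
    rw [pow_succ, mul_assoc, h, mul_zero]

lemma idem_ann_eq {R : Type*} [CommRing R] {e f : R} (he : IsIdempotentElem e)
    (hf : IsIdempotentElem f) (h : annSet R e = annSet R f) : e = f := by
  have he' : e * e = e := he
  have hf' : f * f = f := hf
  have h1 : (1 - e) ∈ annSet R e := by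
    simp only [annSet, Set.mem_setOf_eq]; linear_combination -he'
  have h2 : (1 - f) ∈ annSet R f := by
    simp only [annSet, Set.mem_setOf_eq]; linear_combination -hf'
  rw [h] at h1
  rw [← h] at h2
  simp only [annSet, Set.mem_setOf_eq] at h1 h2
  linear_combination h2 - h1

lemma triangle_not_acyclic {V : Type*} {G : SimpleGraph V} {a b c : V}
    (hab : G.Adj a b) (hbc : G.Adj b c) (hca : G.Adj c a) : ¬ G.IsAcyclic := by
  intro h
  refine h (Walk.cons hab (Walk.cons hbc (Walk.cons hca Walk.nil))) ?_
  have h1 := hab.ne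
  have h2 := hbc.ne
  have h3 := hca.ne
  rw [Walk.cons_isCycle_iff]
  constructor
  · simp [Walk.cons_isPath_iff, h2, h3, Ne.symm h3, Ne.symm h1]
  · simp only [Walk.edges_cons, Walk.edges_nil, List.mem_cons, List.not_mem_nil, or_false]
    push_neg
    constructor
    · intro hh
      rw [Sym2.eq_iff] at hh
      rcases hh with ⟨ha, -⟩ | ⟨ha, -⟩
      · exact h1 ha
      · exact h3 ha.symm
    · intro hh
      rw [Sym2.eq_iff] at hh
      rcases hh with ⟨ha, -⟩ | ⟨-, hb⟩
      · exact h3 ha.symm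
      · exact h2 hb

lemma idem_triangle {R : Type*} [CommRing R] {x y z : R}
    (hx : IsIdempotentElem x) (hy : IsIdempotentElem y) (hz : IsIdempotentElem z)
    (hx0 : x ≠ 0) (hy0 : y ≠ 0) (hz0 : z ≠ 0)
    (hxy : x * y = 0) (hxz : x * z = 0) (hyz : y * z = 0) :
    ¬ (CZDG R).IsAcyclic := by
  have mx : x ∈ Zstar R := ⟨hx0, y, hy0, hxy⟩
  have my : y ∈ Zstar R := ⟨hy0, x, hx0, by rwa [mul_comm]⟩
  have mz : z ∈ Zstar R := ⟨hz0, x, hx0, by rwa [mul_comm]⟩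
  have key : ∀ a b : R, IsIdempotentElem a → IsIdempotentElem b → a ≠ 0 → b ≠ 0 →
      a * b = 0 → annSet R a ≠ annSet R b := by
    intro a b ha hb ha0 hb0 hab h
    have h1 : a ∈ annSet R b := by simpa [annSet, mul_comm] using hab
    rw [← h] at h1
    simp only [annSet, Set.mem_setOf_eq] at h1
    exact ha0 (by rw [← ha]; exact h1)
  have nxy : (⟦⟨x, mx⟩⟧ : CZDVertex R) ≠ ⟦⟨y, my⟩⟧ := fun h =>
    key x y hx hy hx0 hy0 hxy (Quotient.eq.mp h)
  have nxz : (⟦⟨x, mx⟩⟧ : CZDVertex R) ≠ ⟦⟨z, mz⟩⟧ := fun h =>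
    key x z hx hz hx0 hz0 hxz (Quotient.eq.mp h)
  have nyz : (⟦⟨y, my⟩⟧ : CZDVertex R) ≠ ⟦⟨z, mz⟩⟧ := fun h =>
    key y z hy hz hy0 hz0 hyz (Quotient.eq.mp h)
  exact triangle_not_acyclic
    (G := CZDG R)
    ⟨nxy, ⟨x, mx⟩, ⟨y, my⟩, rfl, rfl, hxy⟩
    ⟨nyz, ⟨y, my⟩, ⟨z, mz⟩, rfl, rfl, hyz⟩
    ⟨nxz.symm, ⟨z, mz⟩, ⟨x, mx⟩, rfl, rfl, by rwa [mul_comm]⟩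

lemma ddim_of_two {V : Type*} [Finite V] {G : SimpleGraph V} {u v : V} (huv : u ≠ v)
    (hall : ∀ w : V, w = u ∨ w = v) (hadj : G.Adj u v) : Ddim G = 1 := by
  have hcard : Nat.card V ≠ 1 := by
    intro h
    rw [Nat.card_eq_one_iff_unique] at h
    have := h.1
    exact huv (Subsingleton.elim u v)
  have dist_vu : 0 < G.dist v u := (hadj.symm.reachable).pos_dist_of_ne (Ne.symm huv)
  have hres : IsResolving G {u} := by
    intro p q hpq
    refine ⟨u, rfl, ?_⟩
    rcases hall p with rfl | rfl <;> rcases hall q with rfl | rfl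
    · exact absurd rfl hpq
    · rw [SimpleGraph.dist_self]; exact dist_vu.ne
    · rw [SimpleGraph.dist_self]; exact dist_vu.ne'
    · exact absurd rfl hpq
  have hdom : IsDominating G {u} := by
    intro p hp
    rcases hall p with rfl | rfl
    · exact absurd rfl hp
    · exact ⟨u, rfl, hadj.symm⟩
  unfold Ddim
  rw [if_neg hcard]
  apply le_antisymm
  · exact sInf_le ⟨{u}, hres, hdom, Set.encard_singleton u⟩
  · refine le_sInf ?_
    rintro n ⟨W, hW1, hW2, rfl⟩
    rw [Set.one_le_encard_iff_nonempty]
    by_cases hu : u ∈ W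
    · exact ⟨u, hu⟩
    · obtain ⟨w, hw, -⟩ := hW2 u hu
      exact ⟨w, hw⟩

/-- If `R` is a finite reduced commutative ring that is not an
integral domain and `Γ_E(R)` contains no cycle (its girth is infinite), then
`Γ_E(R)` has exactly two vertices, which are adjacent, and `Ddim (Γ_E R) = 1`. -/
theorem stmt_16 (R : Type*) [CommRing R] [Finite R] [IsReduced R] [Nontrivial R]
    (hd : ¬IsDomain R) (hg : (CZDG R).egirth = ⊤) :
    ∃ u v : CZDVertex R, u ≠ v ∧ (∀ w : CZDVertex R, w = u ∨ w = v) ∧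
      (CZDG R).Adj u v ∧ Ddim (CZDG R) = 1 := by
  classical
  rw [SimpleGraph.egirth_eq_top] at hg
  have hzd : ∃ a b : R, a ≠ 0 ∧ b ≠ 0 ∧ a * b = 0 := by
    by_contra hc
    push_neg at hc
    refine hd ?_
    have : NoZeroDivisors R := ⟨fun {a b} hab => by
      by_contra hab'
      push_neg at hab'
      exact hc a b hab'.1 hab'.2 hab⟩
    exact NoZeroDivisors.to_isDomain R
  obtain ⟨a, b, ha0, hb0, hab⟩ := hzd
  obtain ⟨k, hk, hek⟩ := exists_idem_pow a
  have he' : a ^ k * a ^ k = a ^ k := hek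
  set e := a ^ k with he_def
  have hanne : annSet R e = annSet R a := annSet_pow a hk
  have he0 : e ≠ 0 := fun h => ha0 (IsNilpotent.eq_zero ⟨k, h⟩)
  have heb : e * b = 0 := by
    have hb : b ∈ annSet R a := hab
    rw [← hanne] at hb; exact hb
  have he1 : e ≠ 1 := fun h => hb0 (by rw [h, one_mul] at heb; exact heb)
  have he1' : (1 : R) - e ≠ 0 := sub_ne_zero.mpr (Ne.symm he1)
  have hee : e * (1 - e) = 0 := by linear_combination -he'
  have classify : ∀ f : R, IsIdempotentElem f → f ≠ 0 → f ≠ 1 → f = e ∨ f = 1 - e := by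
    intro f hf hf0 hf1
    by_contra hc
    push_neg at hc
    obtain ⟨hfe, hfe'⟩ := hc
    have hf' : f * f = f := hf
    have hf1' : (1 : R) - f ≠ 0 := sub_ne_zero.mpr (Ne.symm hf1)
    have i1 : IsIdempotentElem (e * f) := hek.mul_of_commute (Commute.all e f) hf
    have i2 : IsIdempotentElem (e * (1 - f)) :=
      hek.mul_of_commute (Commute.all _ _) hf.one_sub
    have i3 : IsIdempotentElem ((1 - e) * f) :=
      hek.one_sub.mul_of_commute (Commute.all _ _) hf
    have i4 : IsIdempotentElem ((1 - e) * (1 - f)) :=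
      hek.one_sub.mul_of_commute (Commute.all _ _) hf.one_sub
    have o12 : (e * f) * (e * (1 - f)) = 0 := by linear_combination (-e * e) * hf'
    have o13 : (e * f) * ((1 - e) * f) = 0 := by linear_combination (-f * f) * he'
    have o14 : (e * f) * ((1 - e) * (1 - f)) = 0 := by
      linear_combination (-f * (1 - f)) * he'
    have o23 : (e * (1 - f)) * ((1 - e) * f) = 0 := by
      linear_combination (-f * (1 - f)) * he'
    have o24 : (e * (1 - f)) * ((1 - e) * (1 - f)) = 0 := by
      linear_combination (-(1 - f) * (1 - f)) * he'
    have o34 : ((1 - e) * f) * ((1 - e) * (1 - f)) = 0 := by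
      linear_combination (-(1 - e) * (1 - e)) * hf'
    have h12 : e * f ≠ 0 ∨ e * (1 - f) ≠ 0 := by
      by_contra h; push_neg at h; exact he0 (by linear_combination h.1 + h.2)
    have h34 : (1 - e) * f ≠ 0 ∨ (1 - e) * (1 - f) ≠ 0 := by
      by_contra h; push_neg at h; exact he1' (by linear_combination h.1 + h.2)
    have h13 : e * f ≠ 0 ∨ (1 - e) * f ≠ 0 := by
      by_contra h; push_neg at h; exact hf0 (by linear_combination h.1 + h.2)
    have h24 : e * (1 - f) ≠ 0 ∨ (1 - e) * (1 - f) ≠ 0 := by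
      by_contra h; push_neg at h; exact hf1' (by linear_combination h.1 + h.2)
    have h23 : e * (1 - f) ≠ 0 ∨ (1 - e) * f ≠ 0 := by
      by_contra h; push_neg at h; exact hfe (by linear_combination h.2 - h.1)
    have h14 : e * f ≠ 0 ∨ (1 - e) * (1 - f) ≠ 0 := by
      by_contra h; push_neg at h; exact hfe' (by linear_combination h.1 - h.2)
    rcases h23 with h2 | h3
    · rcases h14 with h1 | h4
      · rcases h34 with h3 | h4
        · exact idem_triangle i1 i2 i3 h1 h2 h3 o12 o13 o23 hg
        · exact idem_triangle i1 i2 i4 h1 h2 h4 o12 o14 o24 hg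
      · rcases h13 with h1 | h3
        · exact idem_triangle i1 i2 i4 h1 h2 h4 o12 o14 o24 hg
        · exact idem_triangle i2 i3 i4 h2 h3 h4 o23 o24 o34 hg
    · rcases h14 with h1 | h4
      · rcases h24 with h2 | h4
        · exact idem_triangle i1 i2 i3 h1 h2 h3 o12 o13 o23 hg
        · exact idem_triangle i1 i3 i4 h1 h3 h4 o13 o14 o34 hg
      · rcases h12 with h1 | h2
        · exact idem_triangle i1 i3 i4 h1 h3 h4 o13 o14 o34 hg
        · exact idem_triangle i2 i3 i4 h2 h3 h4 o23 o24 o34 hg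
  have hem : e ∈ Zstar R := ⟨he0, 1 - e, he1', hee⟩
  have hcm : (1 : R) - e ∈ Zstar R := ⟨he1', e, he0, by rwa [mul_comm]⟩
  have huv : (⟦⟨e, hem⟩⟧ : CZDVertex R) ≠ ⟦⟨1 - e, hcm⟩⟧ := by
    intro h
    have heq : e = 1 - e := idem_ann_eq hek hek.one_sub (Quotient.eq.mp h)
    exact he0 (by linear_combination e * heq - 2 * he')
  have hadj : (CZDG R).Adj ⟦⟨e, hem⟩⟧ ⟦⟨1 - e, hcm⟩⟧ :=
    ⟨huv, ⟨e, hem⟩, ⟨1 - e, hcm⟩, rfl, rfl, hee⟩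
  have hall : ∀ w : CZDVertex R, w = ⟦⟨e, hem⟩⟧ ∨ w = ⟦⟨1 - e, hcm⟩⟧ := by
    intro w
    obtain ⟨x, hx⟩ := Quotient.exists_rep w
    obtain ⟨k', hk', hfk⟩ := exists_idem_pow (x : R)
    have hx0 := x.2.1
    obtain ⟨y, hy0, hxy⟩ := x.2.2
    have hannf : annSet R ((x : R) ^ k') = annSet R (x : R) := annSet_pow _ hk'
    have hf0 : (x : R) ^ k' ≠ 0 := fun h => hx0 (IsNilpotent.eq_zero ⟨k', h⟩)
    have hfy : (x : R) ^ k' * y = 0 := by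
      have hy : y ∈ annSet R (x : R) := hxy
      rw [← hannf] at hy; exact hy
    have hf1 : (x : R) ^ k' ≠ 1 := fun h => hy0 (by rw [h, one_mul] at hfy; exact hfy)
    rcases classify _ hfk hf0 hf1 with hfe | hfe
    · left
      rw [← hx]
      exact Quotient.sound (show annSet R (x : R) = annSet R e by rw [← hannf, hfe])
    · right
      rw [← hx]
      exact Quotient.sound
        (show annSet R (x : R) = annSet R (1 - e) by rw [← hannf, hfe])
  exact ⟨⟦⟨e, hem⟩⟧, ⟦⟨1 - e, hcm⟩⟧, huv, hall, hadj, ddim_of_two huv hall hadj⟩
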